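/- Let K, M be integers with K ≥ 2 and M ≥ 1, let δ ∈ (0,1), and let Δ > 0 be a real number with M·Δ² ≤ 64. Define T := 102·ln(64·√(8K/δ)/(M·Δ²))/(M·Δ²) + 1. Then for every real x ≥ T, one has ln(8K·x²/δ) ≤ M·Δ²·x/32; equivalently, the global confidence parameter satisfies α_g(x) = √(2·ln(8Kx²/δ)/(Mx)) ≤ Δ/4. -/
import Mathlib


/-- Core inequality of Lemma 4 of the paper: for
`T = 102 · ln(64·√(8K/δ)/(MΔ²))/(MΔ²) + 1`, every `x ≥ T` satisfies
`ln(8K x²/δ) ≤ M Δ² x / 32`, equivalently the global confidence parameter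
`α_g(x) = √(2 ln(8K x²/δ)/(Mx))` is at most `Δ/4`. -/
theorem global_confidence_radius_bound
    (K M : ℕ) (hK : 2 ≤ K) (hM : 1 ≤ M)
    (δ : ℝ) (hδ : δ ∈ Set.Ioo (0 : ℝ) 1)
    (Δ : ℝ) (hΔ : 0 < Δ) (hMΔ : M * Δ ^ 2 ≤ 64) :
    ∀ x : ℝ,
      x ≥ 102 * Real.log (64 * Real.sqrt (8 * K / δ) / (M * Δ ^ 2)) / (M * Δ ^ 2) + 1 →
      Real.log (8 * K * x ^ 2 / δ) ≤ M * Δ ^ 2 * x / 32 ∧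
      Real.sqrt (2 * Real.log (8 * K * x ^ 2 / δ) / (M * x)) ≤ Δ / 4 := by
  obtain ⟨hδ0, hδ1⟩ := hδ
  intro x hx
  have hM1 : (1:ℝ) ≤ M := by exact_mod_cast hM
  have hK2 : (2:ℝ) ≤ K := by exact_mod_cast hK
  have hM0 : (0:ℝ) < M := by linarith
  have hc : (0:ℝ) < M * Δ ^ 2 := by positivity
  have hA0 : (0:ℝ) < 8 * K / δ := by positivity
  have hA16 : (16:ℝ) ≤ 8 * K / δ := by
    rw [le_div_iff₀ hδ0]; nlinarith
  have hsA : (1:ℝ) ≤ Real.sqrt (8 * K / δ) := by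
    rw [show (1:ℝ) = Real.sqrt 1 by simp]
    exact Real.sqrt_le_sqrt (by linarith)
  have hL0 : 0 ≤ Real.log (64 * Real.sqrt (8 * K / δ) / (M * Δ ^ 2)) := by
    apply Real.log_nonneg
    rw [le_div_iff₀ hc]
    nlinarith
  have hx1 : (1:ℝ) ≤ x := by
    have h1 : 0 ≤ 102 * Real.log (64 * Real.sqrt (8 * K / δ) / (M * Δ ^ 2)) / (M * Δ ^ 2) :=
      div_nonneg (by linarith) hc.le
    linarith
  have hx0 : (0:ℝ) < x := by linarith
  -- expand the log defining T
  have hL : Real.log (64 * Real.sqrt (8 * K / δ) / (M * Δ ^ 2))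
      = Real.log 64 + Real.log (8 * K / δ) / 2 - Real.log (M * Δ ^ 2) := by
    rw [Real.log_div (by positivity) hc.ne',
      Real.log_mul (by norm_num) (by positivity), Real.log_sqrt hA0.le]
  rw [hL] at hx
  have hcx : 102 * (Real.log 64 + Real.log (8 * K / δ) / 2 - Real.log (M * Δ ^ 2))
      ≤ (x - 1) * (M * Δ ^ 2) :=
    (div_le_iff₀ hc).mp (by linarith)
  -- tangent-line bound for log x with slope a = (19/3264)·MΔ²
  have hlogx : Real.log x ≤ (19/3264) * (M * Δ ^ 2) * x - 1
      - Real.log (19/3264 : ℝ) - Real.log (M * Δ ^ 2) := by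
    have h1 : Real.log ((19/3264) * (M * Δ ^ 2) * x)
        ≤ (19/3264) * (M * Δ ^ 2) * x - 1 :=
      Real.log_le_sub_one_of_pos (by positivity)
    rw [Real.log_mul (by positivity) hx0.ne',
      Real.log_mul (by norm_num) hc.ne'] at h1
    linarith
  -- numeric fact: log 64 + log(19/3264) = log(19/51) ≥ -1
  have hnum : (-1:ℝ) ≤ Real.log 64 + Real.log (19/3264 : ℝ) := by
    have heq : Real.log 64 + Real.log (19/3264 : ℝ) = Real.log (19/51 : ℝ) := by
      rw [← Real.log_mul (by norm_num) (by norm_num)]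
      norm_num
    rw [heq]
    have he : Real.exp (-1) ≤ 19/51 := by
      have h9 := Real.exp_one_gt_d9
      have hmul : Real.exp (-1) * Real.exp 1 = 1 := by
        rw [← Real.exp_add]; norm_num
      nlinarith [Real.exp_pos (-1)]
    calc (-1:ℝ) = Real.log (Real.exp (-1)) := (Real.log_exp _).symm
      _ ≤ Real.log (19/51 : ℝ) := Real.log_le_log (Real.exp_pos _) he
  -- split the goal log
  have hsplit : Real.log (8 * K * x ^ 2 / δ)
      = Real.log (8 * K / δ) + 2 * Real.log x := by
    rw [show 8 * (K:ℝ) * x ^ 2 / δ = (8 * K / δ) * x ^ 2 by ring,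
      Real.log_mul hA0.ne' (by positivity), Real.log_pow]
    push_cast; ring
  have goal1 : Real.log (8 * K * x ^ 2 / δ) ≤ M * Δ ^ 2 * x / 32 := by
    rw [hsplit]
    nlinarith [hlogx, hcx, hnum, hc]
  refine ⟨goal1, ?_⟩
  have hMx : (0:ℝ) < M * x := by positivity
  have key : 2 * Real.log (8 * K * x ^ 2 / δ) / (M * x) ≤ (Δ / 4) ^ 2 := by
    rw [div_le_iff₀ hMx]
    have hid : (Δ / 4) ^ 2 * ((M:ℝ) * x) = (M * Δ ^ 2 * x / 32) * 2 := by ring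
    linarith [goal1]
  calc Real.sqrt (2 * Real.log (8 * K * x ^ 2 / δ) / (M * x))
      ≤ Real.sqrt ((Δ / 4) ^ 2) := Real.sqrt_le_sqrt key
    _ = Δ / 4 := Real.sqrt_sq (by positivity)
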